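/- For any two logics L_1, L_2 from the set {S4, D4, D, T}, the n-product equals the fusion: L_1 ×_n L_2 = L_1 ⊗ L_2. -/

import Mathlib

set_option autoImplicit false

/-- Modal formulas with `n` modalities (propositional letters indexed by `ℕ`). -/
inductive MFormula (n : ℕ) : Type
  | prop : ℕ → MFormula n
  | bot  : MFormula n
  | imp  : MFormula n → MFormula n → MFormula n
  | box  : Fin n → MFormula n → MFormula n

namespace MFormula

/-- Negation as an abbreviation: ¬φ := φ → ⊥. -/
def neg {n : ℕ} (φ : MFormula n) : MFormula n := φ.imp .bot

/-- Uniform substitution of formulas for propositional letters. -/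
def subst {n : ℕ} (s : ℕ → MFormula n) : MFormula n → MFormula n
  | prop p  => s p
  | bot     => bot
  | imp φ ψ => imp (φ.subst s) (ψ.subst s)
  | box i φ => box i (φ.subst s)

end MFormula

/-- A classical tautology: true under every boolean valuation of formulas
(a valuation respecting `⊥` and `→`, arbitrary on letters and boxed formulas). -/
def IsTautology {n : ℕ} (φ : MFormula n) : Prop :=
  ∀ v : MFormula n → Prop,
    ¬ v .bot → (∀ ψ χ : MFormula n, v (ψ.imp χ) ↔ (v ψ → v χ)) → v φ

/-- Normal modal logics with `n` modalities. -/
structure IsNormalLogic {n : ℕ} (L : Set (MFormula n)) : Prop where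
  taut : ∀ φ : MFormula n, IsTautology φ → φ ∈ L
  kax : ∀ (i : Fin n) (p q : MFormula n),
    ((MFormula.box i (p.imp q)).imp ((MFormula.box i p).imp (MFormula.box i q))) ∈ L
  mp : ∀ φ ψ : MFormula n, φ.imp ψ ∈ L → φ ∈ L → ψ ∈ L
  subst : ∀ (φ : MFormula n) (s : ℕ → MFormula n), φ ∈ L → φ.subst s ∈ L
  nec : ∀ (i : Fin n) (φ : MFormula n), φ ∈ L → MFormula.box i φ ∈ L

/-- The smallest normal logic containing `Γ`. -/
def NormalClosure {n : ℕ} (Γ : Set (MFormula n)) : Set (MFormula n) :=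
  ⋂₀ {L : Set (MFormula n) | IsNormalLogic L ∧ Γ ⊆ L}

/-- The axiom □p → ¬□¬p. -/
def dAx : MFormula 1 :=
  (MFormula.box 0 (.prop 0)).imp (MFormula.neg (MFormula.box 0 (MFormula.neg (.prop 0))))

/-- The axiom □p → p. -/
def tAx : MFormula 1 := (MFormula.box 0 (.prop 0)).imp (.prop 0)

/-- The axiom □p → □□p. -/
def fourAx : MFormula 1 :=
  (MFormula.box 0 (.prop 0)).imp (MFormula.box 0 (MFormula.box 0 (.prop 0)))

def LogicK : Set (MFormula 1) := NormalClosure ∅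
def LogicD : Set (MFormula 1) := NormalClosure (LogicK ∪ {dAx})
def LogicT : Set (MFormula 1) := NormalClosure (LogicK ∪ {tAx})
def LogicD4 : Set (MFormula 1) := NormalClosure (LogicD ∪ {fourAx})
def LogicS4 : Set (MFormula 1) := NormalClosure (LogicT ∪ {fourAx})

/-- Translation of a unimodal formula into the bimodal language, replacing □ by □_i. -/
def trTo (i : Fin 2) : MFormula 1 → MFormula 2
  | .prop p  => .prop p
  | .bot     => .bot
  | .imp φ ψ => .imp (trTo i φ) (trTo i ψ)
  | .box _ φ => .box i (trTo i φ)

/-- The fusion `L₁ ⊗ L₂` of two unimodal logics: the smallest bimodal normal logic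
containing the translation of `L₁` (□ ↦ □₁) and of `L₂` (□ ↦ □₂). -/
def Fusion (L₁ L₂ : Set (MFormula 1)) : Set (MFormula 2) :=
  NormalClosure (trTo 0 '' L₁ ∪ trTo 1 '' L₂)

/-- Truth in a Kripke model. -/
def kSat {n : ℕ} {W : Type} (R : Fin n → W → W → Prop) (V : ℕ → Set W) :
    W → MFormula n → Prop
  | w, .prop p  => w ∈ V p
  | _, .bot     => False
  | w, .imp φ ψ => kSat R V w φ → kSat R V w ψ
  | w, .box i φ => ∀ v : W, R i w v → kSat R V v φ

/-- The logic of a Kripke `n`-frame. -/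
def KLogn {n : ℕ} {W : Type} [Nonempty W] (R : Fin n → W → W → Prop) :
    Set (MFormula n) :=
  {φ | ∀ (V : ℕ → Set W) (w : W), kSat R V w φ}

/-- The logic of a unimodal Kripke frame. -/
def KLog {W : Type} [Nonempty W] (R : W → W → Prop) : Set (MFormula 1) :=
  KLogn (fun _ => R)

/-- The logic of a bimodal Kripke frame. -/
def KLog2 {W : Type} [Nonempty W] (R₁ R₂ : W → W → Prop) : Set (MFormula 2) :=
  KLogn ![R₁, R₂]

/-- Truth in a (monotone) neighborhood model: `x ⊨ □_i φ` iff the truth set of `φ`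
belongs to the filter `τ i x`. -/
def nSat {n : ℕ} {X : Type} (τ : Fin n → X → Filter X) (V : ℕ → Set X) :
    X → MFormula n → Prop
  | x, .prop p  => x ∈ V p
  | _, .bot     => False
  | x, .imp φ ψ => nSat τ V x φ → nSat τ V x ψ
  | x, .box i φ => {y | nSat τ V y φ} ∈ τ i x

/-- The logic of a neighborhood `n`-frame. -/
def NLogn {n : ℕ} {X : Type} [Nonempty X] (τ : Fin n → X → Filter X) :
    Set (MFormula n) :=
  {φ | ∀ (V : ℕ → Set X) (x : X), nSat τ V x φ}

/-- The logic of a unimodal neighborhood frame. -/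
def NLog {X : Type} [Nonempty X] (τ : X → Filter X) : Set (MFormula 1) :=
  NLogn (fun _ => τ)

/-- The logic of a neighborhood 2-frame. -/
def NLog2 {X : Type} [Nonempty X] (τ₁ τ₂ : X → Filter X) : Set (MFormula 2) :=
  NLogn ![τ₁, τ₂]

/-- Validity of a unimodal formula in a neighborhood frame. -/
def NValid {X : Type} (τ : X → Filter X) (φ : MFormula 1) : Prop :=
  ∀ (V : ℕ → Set X) (x : X), nSat (fun _ => τ) V x φ

/-- The neighborhood frame `N(F)` of a Kripke frame `F = (W, R)`:
`τ(w)` is the principal filter of `R(w)`. -/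
def nOfK {W : Type} (R : W → W → Prop) (w : W) : Filter W :=
  Filter.principal {v | R w v}

/-- Bounded morphisms between neighborhood frames (with neighborhood functions
indexed by `ι`). -/
def IsNdMorphism {ι X Y : Type} (τ : ι → X → Filter X) (σ : ι → Y → Filter Y)
    (f : X → Y) : Prop :=
  Function.Surjective f ∧
    ∀ (i : ι) (x : X),
      (∀ U ∈ τ i x, f '' U ∈ σ i (f x)) ∧
      (∀ V ∈ σ i (f x), ∃ U ∈ τ i x, f '' U ⊆ V)

/-- First neighborhood function of the product of two neighborhood frames:
`U ∈ τ'_1(x₁,x₂)` iff `∃ V ∈ τ₁ x₁, V × {x₂} ⊆ U`. -/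
def prodTau1 {X₁ X₂ : Type} (τ₁ : X₁ → Filter X₁) (p : X₁ × X₂) :
    Filter (X₁ × X₂) :=
  (τ₁ p.1).map (fun x => (x, p.2))

/-- Second neighborhood function of the product of two neighborhood frames:
`U ∈ τ'_2(x₁,x₂)` iff `∃ V ∈ τ₂ x₂, {x₁} × V ⊆ U`. -/
def prodTau2 {X₁ X₂ : Type} (τ₂ : X₂ → Filter X₂) (p : X₁ × X₂) :
    Filter (X₁ × X₂) :=
  (τ₂ p.2).map (fun y => (p.1, y))

/-- The successor relation on finite sequences: `a R b` iff `b = a·x` for some `x ∈ A`. -/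
def sucRel (A : Type) (a b : List A) : Prop := ∃ x : A, b = a ++ [x]

/-- The four kinds of tree frames: irreflexive/reflexive, non-transitive/transitive. -/
inductive TreeKind : Type
  | inn  -- irreflexive non-transitive: F_in
  | rn   -- reflexive non-transitive: F_rn (reflexive closure)
  | itr  -- irreflexive transitive: F_it (transitive closure)
  | rt   -- reflexive transitive: F_rt (reflexive-transitive closure)

/-- The relation of the tree frame `F_{ξη}[A]` on `A*`. -/
def treeRel (A : Type) : TreeKind → List A → List A → Prop
  | .inn => sucRel A
  | .rn  => fun a b => a = b ∨ sucRel A a b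
  | .itr => Relation.TransGen (sucRel A)
  | .rt  => Relation.ReflTransGen (sucRel A)

/-- First relation of the product frame `F₁ ⊗ F₂` on `(A ⊔ B)*`:
`x R'_1 y` iff `y = x·z` for some `z ∈ A*` with `Λ R₁ z`. -/
def prodRel1 (A B : Type) (k : TreeKind) (x y : List (A ⊕ B)) : Prop :=
  ∃ z : List A, treeRel A k [] z ∧ y = x ++ z.map Sum.inl

/-- Second relation of the product frame `F₁ ⊗ F₂` on `(A ⊔ B)*`. -/
def prodRel2 (A B : Type) (k : TreeKind) (x y : List (A ⊕ B)) : Prop :=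
  ∃ z : List B, treeRel B k [] z ∧ y = x ++ z.map Sum.inr

/-- Pseudo-infinite sequences over `A ∪ {0}` (with `0` modelled by `none`, so
automatically `0 ∉ A`) that are eventually `0`. -/
def PSeq (A : Type) : Type :=
  {α : ℕ → Option A // ∃ N, ∀ k ≥ N, α k = none}

instance {A : Type} : Nonempty (PSeq A) := ⟨⟨fun _ => none, 0, fun _ _ => rfl⟩⟩

/-- `st(α)`: the least `N` such that `α` has only zeros from position `N` on. -/
noncomputable def PSeq.st {A : Type} (α : PSeq A) : ℕ :=
  sInf {N | ∀ k ≥ N, α.1 k = none}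

/-- `f_F(α)`: the finite sequence obtained from `α` by deleting all zeros. -/
noncomputable def PSeq.forget {A : Type} (α : PSeq A) : List A :=
  ((List.range α.st).map α.1).reduceOption

/-- The basic neighborhood `U_k(α)` of `α`, relative to the relation `R` on `A*`:
`{β ∈ X : α|_m = β|_m and f_F(α) R f_F(β)}` where `m = max(k, st(α))`. -/
def Unbhd {A : Type} (R : List A → List A → Prop) (k : ℕ) (α : PSeq A) :
    Set (PSeq A) :=
  {β | (∀ i < max k α.st, α.1 i = β.1 i) ∧ R α.forget β.forget}

/-- The neighborhood function of `N_ω(F)`: `τ(α)` is the filter generated by the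
base `{U_k(α) : k ∈ ℕ}`. -/
noncomputable def nOmega {A : Type} (R : List A → List A → Prop) (α : PSeq A) :
    Filter (PSeq A) :=
  ⨅ k : ℕ, Filter.principal (Unbhd R k α)

/-- The interleaving `x₁ y₁ x₂ y₂ …` of two pseudo-infinite sequences. -/
def interleave {A B : Type} (α : PSeq A) (β : PSeq B) : PSeq (A ⊕ B) :=
  ⟨fun n => if n % 2 = 0 then (α.1 (n / 2)).map Sum.inl
            else (β.1 (n / 2)).map Sum.inr, by
    obtain ⟨N₁, h₁⟩ := α.2
    obtain ⟨N₂, h₂⟩ := β.2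
    refine ⟨2 * max N₁ N₂, fun k hk => ?_⟩
    have hdiv : max N₁ N₂ ≤ k / 2 := by omega
    by_cases h : k % 2 = 0
    · simp [h, h₁ (k / 2) (le_trans (le_max_left _ _) hdiv)]
    · simp [h, h₂ (k / 2) (le_trans (le_max_right _ _) hdiv)]⟩

/-- The map `g`: delete all zeros from the interleaving of `α` and `β`. -/
noncomputable def gMap {A B : Type} (p : PSeq A × PSeq B) : List (A ⊕ B) :=
  (interleave p.1 p.2).forget

/-- The n-product `L₁ ×_n L₂`: the bimodal logic of the class of products
`𝔛₁ × 𝔛₂` where `𝔛₁` validates `L₁` and `𝔛₂` validates `L₂`. -/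
def nProduct (L₁ L₂ : Set (MFormula 1)) : Set (MFormula 2) :=
  {φ | ∀ (X₁ X₂ : Type), Nonempty X₁ → Nonempty X₂ →
    ∀ (τ₁ : X₁ → Filter X₁) (τ₂ : X₂ → Filter X₂),
      (∀ ψ ∈ L₁, NValid τ₁ ψ) → (∀ ψ ∈ L₂, NValid τ₂ ψ) →
      ∀ (V : ℕ → Set (X₁ × X₂)) (p : X₁ × X₂),
        nSat ![prodTau1 τ₁, prodTau2 τ₂] V p φ}
/-! ### Section 1: syntactic infrastructure -/

deriving instance DecidableEq for MFormula

open MFormula in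
/-- Iterated implication `γ₁ → (γ₂ → … → χ)`. -/
def impList {n : ℕ} (Γ : List (MFormula n)) (χ : MFormula n) : MFormula n :=
  Γ.foldr MFormula.imp χ

/-- A "boolean valuation" on formulas. -/
def IsVal {n : ℕ} (v : MFormula n → Prop) : Prop :=
  ¬ v .bot ∧ ∀ ψ χ : MFormula n, v (ψ.imp χ) ↔ (v ψ → v χ)

lemma val_impList {n : ℕ} {v : MFormula n → Prop} (hv : IsVal v)
    (Γ : List (MFormula n)) (χ : MFormula n) :
    v (impList Γ χ) ↔ ((∀ γ ∈ Γ, v γ) → v χ) := by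
  induction Γ with
  | nil => simp [impList]
  | cons γ Γ ih =>
    simp only [impList, List.foldr_cons] at *
    rw [hv.2, ih]
    constructor
    · intro h hall; exact h (hall γ (by simp)) (fun g hg => hall g (by simp [hg]))
    · intro h hγ hall
      refine h (fun g hg => ?_)
      rcases List.mem_cons.1 hg with rfl | hg'
      · exact hγ
      · exact hall g hg'

namespace IsNormalLogic

variable {n : ℕ} {L : Set (MFormula n)} (hL : IsNormalLogic L)
include hL

/-- Workhorse: semantic derivation of iterated implications. -/
lemma sem (Γ : List (MFormula n)) (χ : MFormula n)
    (H : ∀ v : MFormula n → Prop, IsVal v → (∀ γ ∈ Γ, v γ) → v χ) :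
    impList Γ χ ∈ L := by
  apply hL.taut
  intro v hb hi
  exact (val_impList ⟨hb, hi⟩ Γ χ).2 (H v ⟨hb, hi⟩)

lemma sem1 (φ χ : MFormula n)
    (H : ∀ v : MFormula n → Prop, IsVal v → v φ → v χ)
    (hφ : φ ∈ L) : χ ∈ L := by
  refine hL.mp φ χ ?_ hφ
  have := hL.sem [φ] χ (fun v hv hall => H v hv (hall φ (by simp)))
  simpa [impList] using this

/-- `□(γ₁→…→γₙ→χ) → (□γ₁→…→□γₙ→□χ)` is derivable. -/
lemma boxQ (i : Fin n) (Γ : List (MFormula n)) (χ : MFormula n) :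
    (MFormula.box i (impList Γ χ)).imp
      (impList (Γ.map (MFormula.box i)) (MFormula.box i χ)) ∈ L := by
  induction Γ generalizing χ with
  | nil =>
    exact hL.taut _ (fun v hb hi => by simpa [impList] using (hi _ _).2 id)
  | cons γ Γ ih =>
    -- impList (γ::Γ) χ = γ.imp (impList Γ χ)
    have k := hL.kax i γ (impList Γ χ)
    -- k : □(γ → rest) → (□γ → □rest)
    have ihh := ih (χ := χ)
    -- combine: A→(B→C) and C→D gives A→(B→D)
    have : ((MFormula.box i (impList (γ :: Γ) χ)).imp
        ((MFormula.box i γ).imp (MFormula.box i (impList Γ χ)))) ∈ L := k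
    refine hL.mp _ _ (hL.mp _ _ (hL.taut _ ?_) this) ihh
    intro v hb hi
    simp only [List.map_cons, impList, List.foldr_cons]
    simp only [hi]
    intro h1 h2 h3 h4
    exact h2 (h1 h3 h4)

/-- From `⊢ γ₁→…→γₙ→χ` conclude `⊢ □γ₁→…→□γₙ→□χ`. -/
lemma boxP (i : Fin n) {Γ : List (MFormula n)} {χ : MFormula n}
    (h : impList Γ χ ∈ L) :
    impList (Γ.map (MFormula.box i)) (MFormula.box i χ) ∈ L :=
  hL.mp _ _ (hL.boxQ i Γ χ) (hL.nec i _ h)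

end IsNormalLogic

/-! NormalClosure lemmas -/

lemma normalClosure_isNormal {n : ℕ} (Γ : Set (MFormula n)) :
    IsNormalLogic (NormalClosure Γ) := by
  constructor
  · intro φ hφ S hS; exact hS.1.taut φ hφ
  · intro i p q S hS; exact hS.1.kax i p q
  · intro φ ψ h1 h2 S hS; exact hS.1.mp φ ψ (h1 S hS) (h2 S hS)
  · intro φ s h S hS; exact hS.1.subst φ s (h S hS)
  · intro i φ h S hS; exact hS.1.nec i φ (h S hS)

lemma subset_normalClosure {n : ℕ} (Γ : Set (MFormula n)) :
    Γ ⊆ NormalClosure Γ := fun φ hφ S hS => hS.2 hφ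

lemma normalClosure_min {n : ℕ} {Γ L : Set (MFormula n)}
    (hL : IsNormalLogic L) (h : Γ ⊆ L) : NormalClosure Γ ⊆ L :=
  fun φ hφ => hφ L ⟨hL, h⟩

lemma normalClosure_mono {n : ℕ} {Γ Δ : Set (MFormula n)} (h : Γ ⊆ Δ) :
    NormalClosure Γ ⊆ NormalClosure Δ :=
  normalClosure_min (normalClosure_isNormal Δ) (h.trans (subset_normalClosure Δ))
/-! ### Section 2: consistency, maximal consistent sets, Lindenbaum -/

/-- A set of formulas is `L`-consistent if no finite subset implies `⊥` over `L`. -/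
def LCon {n : ℕ} (L : Set (MFormula n)) (S : Set (MFormula n)) : Prop :=
  ∀ Γ : List (MFormula n), (∀ γ ∈ Γ, γ ∈ S) → impList Γ .bot ∉ L

/-- Maximal `L`-consistent sets. -/
def LMcs {n : ℕ} (L : Set (MFormula n)) (x : Set (MFormula n)) : Prop :=
  LCon L x ∧ ∀ φ : MFormula n, φ ∈ x ∨ φ.neg ∈ x

section MCS

variable {n : ℕ} {L : Set (MFormula n)} (hL : IsNormalLogic L)
include hL

lemma LMcs.not_both {x : Set (MFormula n)} (hx : LMcs L x) {φ : MFormula n}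
    (h1 : φ ∈ x) (h2 : φ.neg ∈ x) : False := by
  refine hx.1 [φ, φ.neg] ?_ (hL.sem _ _ ?_)
  · intro γ hγ
    rcases List.mem_cons.1 hγ with rfl | hγ
    · exact h1
    · rcases List.mem_cons.1 hγ with rfl | hγ
      · exact h2
      · simp at hγ
  · intro v hv hall
    have hφ := hall φ (by simp)
    have hnφ := hall φ.neg (by simp)
    rw [MFormula.neg, hv.2] at hnφ
    exact hnφ hφ

/-- Workhorse: an MCS is closed under semantic consequence from finitely many members. -/
lemma LMcs.closed {x : Set (MFormula n)} (hx : LMcs L x)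
    (Γ : List (MFormula n)) (hΓ : ∀ γ ∈ Γ, γ ∈ x) {χ : MFormula n}
    (h : impList Γ χ ∈ L) : χ ∈ x := by
  rcases hx.2 χ with hc | hc
  · exact hc
  exfalso
  refine hx.1 (Γ ++ [χ.neg]) ?_ ?_
  · intro γ hγ
    rcases List.mem_append.1 hγ with hγ | hγ
    · exact hΓ γ hγ
    · simp at hγ; subst hγ; exact hc
  · refine hL.sem1 _ _ ?_ h
    intro v hv h1
    rw [val_impList hv] at h1 ⊢
    intro hall
    have hχ := h1 (fun γ hγ => hall γ (by simp [hγ]))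
    have hnχ := hall χ.neg (by simp)
    rw [MFormula.neg, hv.2] at hnχ
    exact (hv.1 (hnχ hχ)).elim

lemma LMcs.mem_of_L {x : Set (MFormula n)} (hx : LMcs L x) {φ : MFormula n}
    (h : φ ∈ L) : φ ∈ x := by
  refine hx.closed hL [] (by simp) ?_
  simpa [impList] using h

lemma LMcs.mp {x : Set (MFormula n)} (hx : LMcs L x) {φ ψ : MFormula n}
    (h1 : φ.imp ψ ∈ x) (h2 : φ ∈ x) : ψ ∈ x := by
  refine hx.closed hL [φ.imp ψ, φ] ?_ (hL.sem _ _ ?_)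
  · intro γ hγ
    rcases List.mem_cons.1 hγ with rfl | hγ
    · exact h1
    · rcases List.mem_cons.1 hγ with rfl | hγ
      · exact h2
      · simp at hγ
  · intro v hv hall
    exact (hv.2 _ _).1 (hall _ (by simp)) (hall φ (by simp))

lemma LMcs.bot_not_mem {x : Set (MFormula n)} (hx : LMcs L x) :
    MFormula.bot ∉ (x : Set (MFormula n)) := by
  intro h
  refine hx.1 [.bot] (by simpa using h) (hL.sem _ _ ?_)
  intro v hv hall
  exact hall _ (by simp)

lemma LMcs.imp_mem {x : Set (MFormula n)} (hx : LMcs L x) {φ ψ : MFormula n} :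
    φ.imp ψ ∈ x ↔ (φ ∈ x → ψ ∈ x) := by
  constructor
  · exact fun h1 h2 => hx.mp hL h1 h2
  · intro h
    rcases hx.2 φ with hφ | hφ
    · have hψ := h hφ
      refine hx.closed hL [ψ] (by simpa using hψ) (hL.sem _ _ ?_)
      intro v hv hall
      exact (hv.2 _ _).2 (fun _ => hall ψ (by simp))
    · refine hx.closed hL [φ.neg] (by simpa using hφ) (hL.sem _ _ ?_)
      intro v hv hall
      have := hall φ.neg (by simp)
      rw [MFormula.neg, hv.2] at this
      exact (hv.2 _ _).2 (fun hφ' => ((hv.1 (this hφ')).elim))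

end MCS


lemma chain_bound {α : Type} {c : Set (Set α)} (hchain : IsChain (· ⊆ ·) c)
    (hne : c.Nonempty) :
    ∀ Γ : List α, (∀ γ ∈ Γ, ∃ T ∈ c, γ ∈ T) → ∃ T ∈ c, ∀ γ ∈ Γ, γ ∈ T := by
  intro Γ
  induction Γ with
  | nil => exact fun _ => ⟨hne.choose, hne.choose_spec, by simp⟩
  | cons γ Γ ih =>
    intro h
    obtain ⟨T, hTc, hT⟩ := ih (fun g hg => h g (by simp [hg]))
    obtain ⟨T', hT'c, hT'⟩ := h γ (by simp)
    rcases hchain.total hTc hT'c with hsub | hsub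
    · refine ⟨T', hT'c, fun g hg => ?_⟩
      rcases List.mem_cons.1 hg with rfl | hg
      · exact hT'
      · exact hsub (hT g hg)
    · refine ⟨T, hTc, fun g hg => ?_⟩
      rcases List.mem_cons.1 hg with rfl | hg
      · exact hsub hT'
      · exact hT g hg

/-- Lindenbaum's lemma. -/
lemma lindenbaum {n : ℕ} {L S : Set (MFormula n)} (hL : IsNormalLogic L)
    (hS : LCon L S) :
    ∃ x : Set (MFormula n), LMcs L x ∧ S ⊆ x := by
  have hzorn : ∀ c ⊆ {T | LCon L T}, IsChain (· ⊆ ·) c → c.Nonempty →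
      ∃ ub ∈ {T | LCon L T}, ∀ s ∈ c, s ⊆ ub := by
    intro c hc hchain hne
    refine ⟨⋃₀ c, ?_, fun s hs => Set.subset_sUnion_of_mem hs⟩
    intro Γ hΓ hbot
    obtain ⟨T, hTc, hT⟩ := chain_bound hchain hne Γ (fun γ hγ => hΓ γ hγ)
    exact hc hTc Γ hT hbot
  obtain ⟨m, hSm, hmax⟩ := zorn_subset_nonempty {T | LCon L T} hzorn S hS
  · refine ⟨m, ⟨hmax.1, ?_⟩, hSm⟩
    intro φ
    by_contra hcon
    push_neg at hcon
    obtain ⟨h1, h2⟩ := hcon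
    have hinc : ∀ ψ : MFormula n, ψ ∉ m →
        ∃ Γ : List (MFormula n), (∀ γ ∈ Γ, γ ∈ insert ψ m) ∧ impList Γ .bot ∈ L := by
      intro ψ hψ
      by_contra hno
      push_neg at hno
      have hcons : LCon L (insert ψ m) := fun Γ hΓ hbot => hno Γ hΓ hbot
      exact hψ (hmax.2 hcons (Set.subset_insert _ _) (Set.mem_insert _ _))
    obtain ⟨Γ, hΓ, hΓbot⟩ := hinc φ h1
    obtain ⟨Γ', hΓ', hΓ'bot⟩ := hinc φ.neg h2
    set Δ := Γ.filter (fun γ => γ ≠ φ) ++ Γ'.filter (fun γ => γ ≠ φ.neg) with hΔ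
    refine hmax.1 Δ ?_ ?_
    · intro γ hγ
      rcases List.mem_append.1 hγ with hγ | hγ
      · have hmem := List.mem_of_mem_filter hγ
        have hp := List.of_mem_filter hγ
        simp only [decide_eq_true_eq] at hp
        rcases hΓ γ hmem with rfl | hm
        · exact absurd rfl hp
        · exact hm
      · have hmem := List.mem_of_mem_filter hγ
        have hp := List.of_mem_filter hγ
        simp only [decide_eq_true_eq] at hp
        rcases hΓ' γ hmem with rfl | hm
        · exact absurd rfl hp
        · exact hm
    · have taut : (impList Γ .bot).imp ((impList Γ' .bot).imp (impList Δ .bot)) ∈ L := by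
        refine hL.taut _ ?_
        intro v hb hi
        have hv : IsVal v := ⟨hb, hi⟩
        rw [hi, hi, val_impList hv, val_impList hv, val_impList hv]
        intro hg hg' hall
        by_cases hφ : v φ
        · refine hg (fun γ hγ => ?_)
          by_cases he : γ = φ
          · exact he ▸ hφ
          · exact hall γ (List.mem_append.2 (Or.inl (List.mem_filter.2
              ⟨hγ, by simp [he]⟩)))
        · have hnφ : v φ.neg := by rw [MFormula.neg, hi]; exact fun h => (hφ h).elim
          refine hg' (fun γ hγ => ?_)
          by_cases he : γ = φ.neg
          · exact he ▸ hnφ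
          · exact hall γ (List.mem_append.2 (Or.inr (List.mem_filter.2
              ⟨hγ, by simp [he]⟩)))
      exact hL.mp _ _ (hL.mp _ _ taut hΓbot) hΓ'bot
/-! ### Section 3: canonical model -/

/-- Canonical relation. -/
def canR {n : ℕ} (i : Fin n) (x y : Set (MFormula n)) : Prop :=
  ∀ χ : MFormula n, MFormula.box i χ ∈ x → χ ∈ y

section Canonical

variable {n : ℕ} {L : Set (MFormula n)} (hL : IsNormalLogic L)
include hL

/-- Existence lemma. -/
lemma exists_succ {x : Set (MFormula n)} (hx : LMcs L x) (i : Fin n)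
    {ψ : MFormula n} (h : MFormula.box i ψ ∉ x) :
    ∃ y : Set (MFormula n), LMcs L y ∧ canR i x y ∧ ψ ∉ y := by
  have hS : LCon L ({χ | MFormula.box i χ ∈ x} ∪ {ψ.neg}) := by
    intro Γ hΓ hbot
    set Γ' := Γ.filter (fun γ => γ ≠ ψ.neg) with hΓ'def
    have h1 : ∀ γ ∈ Γ', MFormula.box i γ ∈ x := by
      intro γ hγ
      have hmem := List.mem_of_mem_filter hγ
      have hp := List.of_mem_filter hγ
      simp only [decide_eq_true_eq] at hp
      rcases hΓ γ hmem with hm | hm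
      · exact hm
      · exact absurd hm hp
    have taut : (impList Γ .bot).imp (impList Γ' ψ) ∈ L := by
      refine hL.taut _ ?_
      intro v hb hi
      have hv : IsVal v := ⟨hb, hi⟩
      rw [hi, val_impList hv, val_impList hv]
      intro hg hall
      by_cases hψ : v ψ
      · exact hψ
      exfalso
      refine hb (hg fun γ hγ => ?_)
      by_cases he : γ = ψ.neg
      · subst he; rw [MFormula.neg, hi]; exact fun h' => (hψ h').elim
      · exact hall γ (List.mem_filter.2 ⟨hγ, by simp [he]⟩)
    have h2 : impList Γ' ψ ∈ L := hL.mp _ _ taut hbot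
    have h3 := hL.boxP i h2
    have h4 : MFormula.box i ψ ∈ x := by
      refine hx.closed hL (Γ'.map (MFormula.box i)) ?_ h3
      intro γ hγ
      obtain ⟨γ', hγ', rfl⟩ := List.mem_map.1 hγ
      exact h1 γ' hγ'
    exact h h4
  obtain ⟨y, hy, hSy⟩ := lindenbaum hL hS
  refine ⟨y, hy, ?_, ?_⟩
  · exact fun χ hχ => hSy (Or.inl hχ)
  · intro hψ
    exact hy.not_both hL hψ (hSy (Or.inr rfl))

lemma canR_serial {i : Fin n}
    (hD : ∀ χ : MFormula n,
      (MFormula.box i χ).imp (MFormula.box i χ.neg).neg ∈ L)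
    {x : Set (MFormula n)} (hx : LMcs L x) :
    ∃ y : Set (MFormula n), LMcs L y ∧ canR i x y := by
  have hS : LCon L {χ | MFormula.box i χ ∈ x} := by
    intro Γ hΓ hbot
    have h3 := hL.boxP i (Γ := Γ) (χ := .bot) (by simpa [impList] using hbot)
    have h4 : MFormula.box i .bot ∈ x :=
      hx.closed hL _ (fun γ hγ => by
        obtain ⟨γ', hγ', rfl⟩ := List.mem_map.1 hγ; exact hΓ γ' hγ') h3
    -- from □⊥ derive □(¬⊥)
    have h5 : impList [MFormula.bot] (MFormula.bot.neg : MFormula n) ∈ L := by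
      refine hL.sem _ _ ?_
      intro v hv hall
      rw [MFormula.neg, hv.2]
      exact fun h => h
    have h6 := hL.boxP i h5
    have h7 : MFormula.box i (MFormula.bot.neg) ∈ x :=
      hx.closed hL [MFormula.box i .bot] (by simpa using h4) (by simpa using h6)
    have h8 : (MFormula.box i (MFormula.bot.neg)).neg ∈ x :=
      hx.mp hL (hx.mem_of_L hL (hD .bot)) h4
    exact hx.not_both hL h7 h8
  obtain ⟨y, hy, hSy⟩ := lindenbaum hL hS
  exact ⟨y, hy, fun χ hχ => hSy hχ⟩

lemma canR_refl {i : Fin n}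
    (hT : ∀ χ : MFormula n, (MFormula.box i χ).imp χ ∈ L)
    {x : Set (MFormula n)} (hx : LMcs L x) : canR i x x :=
  fun χ hχ => hx.mp hL (hx.mem_of_L hL (hT χ)) hχ

lemma canR_trans {i : Fin n}
    (h4 : ∀ χ : MFormula n,
      (MFormula.box i χ).imp (MFormula.box i (MFormula.box i χ)) ∈ L)
    {x y z : Set (MFormula n)} (hx : LMcs L x)
    (hxy : canR i x y) (hyz : canR i y z) : canR i x z := by
  intro χ hχ
  exact hyz χ (hxy _ (hx.mp hL (hx.mem_of_L hL (h4 χ)) hχ))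

/-- The canonical neighborhood frame and valuation, and the truth lemma. -/
lemma truth_lemma (φ : MFormula n) (x : {x : Set (MFormula n) // LMcs L x}) :
    nSat (fun i x => Filter.principal {y : {x : Set (MFormula n) // LMcs L x} | canR i x.1 y.1})
      (fun p => {x | MFormula.prop p ∈ x.1}) x φ ↔ φ ∈ x.1 := by
  induction φ generalizing x with
  | prop p => simp [nSat]
  | bot => simpa [nSat] using fun h => x.2.bot_not_mem hL h
  | imp φ ψ ihφ ihψ =>
    simp only [nSat, ihφ, ihψ]
    exact (x.2.imp_mem hL).symm
  | box i φ ih =>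
    simp only [nSat, Filter.mem_principal]
    constructor
    · intro h
      by_contra hbox
      obtain ⟨y, hy, hcan, hφ⟩ := exists_succ hL x.2 i hbox
      exact hφ ((ih ⟨y, hy⟩).1 (h hcan))
    · intro h y hy
      exact (ih y).2 (hy φ h)

end Canonical
/-! ### Section 4: neighborhood semantics, generic lemmas -/

lemma nSat_subst {n : ℕ} {X : Type} (τ : Fin n → X → Filter X) (V : ℕ → Set X)
    (s : ℕ → MFormula n) (φ : MFormula n) (x : X) :
    nSat τ V x (φ.subst s) ↔
      nSat τ (fun p => {y | nSat τ V y (s p)}) x φ := by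
  induction φ generalizing x with
  | prop p => simp [MFormula.subst, nSat]
  | bot => exact Iff.rfl
  | imp φ ψ ihφ ihψ => simp only [MFormula.subst, nSat, ihφ, ihψ]
  | box i φ ih =>
    simp only [MFormula.subst, nSat]
    constructor
    · intro h
      refine Filter.mem_of_superset h ?_
      intro y; exact (ih y).1
    · intro h
      refine Filter.mem_of_superset h ?_
      intro y; exact (ih y).2

lemma nlogn_isNormal {n : ℕ} {X : Type} [Nonempty X] (τ : Fin n → X → Filter X) :
    IsNormalLogic (NLogn τ) := by
  constructor
  · intro φ hφ V x
    exact hφ (fun ψ => nSat τ V x ψ) (fun h => h) (fun _ _ => Iff.rfl)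
  · intro i p q V x
    intro h1 h2
    refine Filter.mem_of_superset (Filter.inter_mem h1 h2) ?_
    rintro y ⟨hy1, hy2⟩
    exact hy1 hy2
  · intro φ ψ h1 h2 V x
    exact h1 V x (h2 V x)
  · intro φ s h V x
    exact (nSat_subst τ V s φ x).2 (h _ x)
  · intro i φ h V x
    have : {y | nSat τ V y φ} = Set.univ := Set.eq_univ_of_forall (h V)
    simp only [nSat, this]
    exact Filter.univ_mem

lemma nProduct_isNormal (L₁ L₂ : Set (MFormula 1)) :
    IsNormalLogic (nProduct L₁ L₂) := by
  constructor
  · intro φ hφ X₁ X₂ h1 h2 τ₁ τ₂ hv1 hv2 V p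
    exact hφ (fun ψ => nSat _ V p ψ) (fun h => h) (fun _ _ => Iff.rfl)
  · intro i p q X₁ X₂ h1 h2 τ₁ τ₂ hv1 hv2 V x
    intro ha hb
    refine Filter.mem_of_superset (Filter.inter_mem ha hb) ?_
    rintro y ⟨hy1, hy2⟩
    exact hy1 hy2
  · intro φ ψ ha hb X₁ X₂ h1 h2 τ₁ τ₂ hv1 hv2 V x
    exact ha X₁ X₂ h1 h2 τ₁ τ₂ hv1 hv2 V x (hb X₁ X₂ h1 h2 τ₁ τ₂ hv1 hv2 V x)
  · intro φ s h X₁ X₂ h1 h2 τ₁ τ₂ hv1 hv2 V x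
    exact (nSat_subst _ V s φ x).2 (h X₁ X₂ h1 h2 τ₁ τ₂ hv1 hv2 _ x)
  · intro i φ h X₁ X₂ h1 h2 τ₁ τ₂ hv1 hv2 V x
    have : {y | nSat ![prodTau1 τ₁, prodTau2 τ₂] V y φ} = Set.univ :=
      Set.eq_univ_of_forall (h X₁ X₂ h1 h2 τ₁ τ₂ hv1 hv2 V)
    simp only [nSat, this]
    exact Filter.univ_mem

lemma nSat_trTo0 {X₁ X₂ : Type} (τ₁ : X₁ → Filter X₁) (τ₂ : X₂ → Filter X₂)
    (V : ℕ → Set (X₁ × X₂)) (φ : MFormula 1) (x₂ : X₂) (x₁ : X₁) :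
    nSat ![prodTau1 τ₁, prodTau2 τ₂] V (x₁, x₂) (trTo 0 φ) ↔
      nSat (fun _ => τ₁) (fun p => {a | (a, x₂) ∈ V p}) x₁ φ := by
  induction φ generalizing x₁ with
  | prop p => simp [trTo, nSat]
  | bot => simp [trTo, nSat]
  | imp φ ψ ihφ ihψ => simp only [trTo, nSat, ihφ, ihψ]
  | box i φ ih =>
    simp only [trTo, nSat, Matrix.cons_val_zero, prodTau1, Filter.mem_map]
    constructor
    · intro h
      refine Filter.mem_of_superset h ?_
      intro a ha; exact (ih a).1 ha
    · intro h
      refine Filter.mem_of_superset h ?_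
      intro a ha; exact (ih a).2 ha

lemma nSat_trTo1 {X₁ X₂ : Type} (τ₁ : X₁ → Filter X₁) (τ₂ : X₂ → Filter X₂)
    (V : ℕ → Set (X₁ × X₂)) (φ : MFormula 1) (x₁ : X₁) (x₂ : X₂) :
    nSat ![prodTau1 τ₁, prodTau2 τ₂] V (x₁, x₂) (trTo 1 φ) ↔
      nSat (fun _ => τ₂) (fun p => {b | (x₁, b) ∈ V p}) x₂ φ := by
  induction φ generalizing x₂ with
  | prop p => simp [trTo, nSat]
  | bot => simp [trTo, nSat]
  | imp φ ψ ihφ ihψ => simp only [trTo, nSat, ihφ, ihψ]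
  | box i φ ih =>
    simp only [trTo, nSat, Matrix.cons_val_one, Matrix.head_cons, Matrix.cons_val_zero, prodTau2,
      Filter.mem_map]
    constructor
    · intro h
      refine Filter.mem_of_superset h ?_
      intro b hb; exact (ih b).1 hb
    · intro h
      refine Filter.mem_of_superset h ?_
      intro b hb; exact (ih b).2 hb

lemma fusion_subset_nProduct (L₁ L₂ : Set (MFormula 1)) :
    Fusion L₁ L₂ ⊆ nProduct L₁ L₂ := by
  refine normalClosure_min (nProduct_isNormal L₁ L₂) ?_
  rintro φ (⟨ψ, hψ, rfl⟩ | ⟨ψ, hψ, rfl⟩)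
  · intro X₁ X₂ h1 h2 τ₁ τ₂ hv1 hv2 V p
    exact (nSat_trTo0 τ₁ τ₂ V ψ p.2 p.1).2 (hv1 ψ hψ _ p.1)
  · intro X₁ X₂ h1 h2 τ₁ τ₂ hv1 hv2 V p
    exact (nSat_trTo1 τ₁ τ₂ V ψ p.1 p.2).2 (hv2 ψ hψ _ p.2)

/-- Pointwise bounded-morphism conditions imply truth preservation. -/
lemma nSat_transfer {n : ℕ} {X Y : Type} (τ : Fin n → X → Filter X)
    (σ : Fin n → Y → Filter Y) (f : X → Y)
    (hm : ∀ (i : Fin n) (x : X),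
      (∀ U ∈ τ i x, f '' U ∈ σ i (f x)) ∧
      (∀ V ∈ σ i (f x), ∃ U ∈ τ i x, f '' U ⊆ V))
    (V : ℕ → Set Y) (φ : MFormula n) (x : X) :
    nSat τ (fun p => f ⁻¹' (V p)) x φ ↔ nSat σ V (f x) φ := by
  induction φ generalizing x with
  | prop p => simp [nSat]
  | bot => simp [nSat]
  | imp φ ψ ihφ ihψ => simp only [nSat, ihφ, ihψ]
  | box i φ ih =>
    simp only [nSat]
    have hset : {y | nSat τ (fun p => f ⁻¹' (V p)) y φ} =
        f ⁻¹' {y | nSat σ V y φ} := by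
      ext y; exact ih y
    rw [hset]
    constructor
    · intro h
      have := (hm i x).1 _ h
      refine Filter.mem_of_superset this ?_
      rintro y ⟨z, hz, rfl⟩
      exact hz
    · intro h
      obtain ⟨U, hU, hUsub⟩ := (hm i x).2 _ h
      refine Filter.mem_of_superset hU ?_
      intro z hz
      exact hUsub ⟨z, hz, rfl⟩

/-- Kripke p-morphism conditions give the pointwise bounded-morphism conditions
for the associated principal-filter neighborhood frames. -/
lemma pmorphism_conditions {n : ℕ} {X Y : Type} (R : Fin n → X → X → Prop)
    (S : Fin n → Y → Y → Prop) (f : X → Y)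
    (hforth : ∀ (i : Fin n) (x x' : X), R i x x' → S i (f x) (f x'))
    (hback : ∀ (i : Fin n) (x : X) (v : Y), S i (f x) v → ∃ x', R i x x' ∧ f x' = v)
    (i : Fin n) (x : X) :
    (∀ U ∈ nOfK (R i) x, f '' U ∈ nOfK (S i) (f x)) ∧
    (∀ V ∈ nOfK (S i) (f x), ∃ U ∈ nOfK (R i) x, f '' U ⊆ V) := by
  constructor
  · intro U hU
    rw [nOfK, Filter.mem_principal] at hU ⊢
    intro v hv
    obtain ⟨x', hR, rfl⟩ := hback i x v hv
    exact ⟨x', hU hR, rfl⟩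
  · intro V hV
    rw [nOfK, Filter.mem_principal] at hV
    refine ⟨f ⁻¹' V, ?_, ?_⟩
    · rw [nOfK, Filter.mem_principal]
      intro x' hx'
      exact hV (hforth i x x' hx')
    · rintro y ⟨z, hz, rfl⟩
      exact hz
/-! ### Section 5: tree relations and unraveling p-morphisms -/

/-- The frame condition corresponding to each tree kind. -/
def FrameProp {W : Type} : TreeKind → (W → W → Prop) → Prop
  | .inn, R => ∀ u, ∃ v, R u v
  | .rn, R => ∀ u, R u u
  | .itr, R => (∀ u, ∃ v, R u v) ∧ Transitive R
  | .rt, R => (∀ u, R u u) ∧ Transitive R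

lemma FrameProp.serial {W : Type} {k : TreeKind} {R : W → W → Prop}
    (h : FrameProp k R) : ∀ u, ∃ v, R u v := by
  cases k with
  | inn => exact h
  | rn => exact fun u => ⟨u, h u⟩
  | itr => exact h.1
  | rt => exact fun u => ⟨u, h.1 u⟩

lemma treeRel_single {A : Type} (k : TreeKind) (v : A) : treeRel A k [] [v] := by
  cases k with
  | inn => exact ⟨v, rfl⟩
  | rn => exact Or.inr ⟨v, rfl⟩
  | itr => exact Relation.TransGen.single ⟨v, rfl⟩
  | rt => exact Relation.ReflTransGen.single ⟨v, rfl⟩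

lemma treeRel_refl {A : Type} {k : TreeKind} (hk : k = .rn ∨ k = .rt)
    (a : List A) : treeRel A k a a := by
  rcases hk with rfl | rfl
  · exact Or.inl rfl
  · exact Relation.ReflTransGen.refl

lemma treeRel_trans {A : Type} {k : TreeKind} (hk : k = .itr ∨ k = .rt)
    {a b c : List A} (h1 : treeRel A k a b) (h2 : treeRel A k b c) :
    treeRel A k a c := by
  rcases hk with rfl | rfl
  · exact h1.trans h2
  · exact h1.trans h2

lemma sucRel_append {A : Type} (a : List A) {x y : List A} (h : sucRel A x y) :
    sucRel A (a ++ x) (a ++ y) := by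
  obtain ⟨c, rfl⟩ := h
  exact ⟨c, by simp⟩

/-- Lifting: `treeRel [] t → treeRel a (a ++ t)`. -/
lemma treeRel_append {A : Type} {k : TreeKind} (a : List A) {t : List A}
    (h : treeRel A k [] t) : treeRel A k a (a ++ t) := by
  cases k with
  | inn => simpa [treeRel] using sucRel_append a h
  | rn =>
    rcases h with h | h
    · left; rw [← h]; simp
    · right; simpa using sucRel_append a h
  | itr =>
    have := Relation.TransGen.lift (f := (a ++ ·)) (fun x y hxy => sucRel_append a hxy) _ _ h
    simpa [Function.onFun, treeRel] using this
  | rt =>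
    have := Relation.ReflTransGen.lift (f := (a ++ ·)) (fun x y hxy => sucRel_append a hxy) _ _ h
    simpa [Function.onFun, treeRel] using this

/-- Decomposition: `treeRel a b → b = a ++ t` with `treeRel [] t`. -/
lemma treeRel_decomp {A : Type} {k : TreeKind} {a b : List A}
    (h : treeRel A k a b) : ∃ t : List A, b = a ++ t ∧ treeRel A k [] t := by
  cases k with
  | inn =>
    obtain ⟨c, rfl⟩ := h
    exact ⟨[c], rfl, treeRel_single _ c⟩
  | rn =>
    rcases h with rfl | ⟨c, rfl⟩
    · exact ⟨[], by simp, Or.inl rfl⟩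
    · exact ⟨[c], rfl, treeRel_single _ c⟩
  | itr =>
    induction h with
    | single h =>
      obtain ⟨c, rfl⟩ := h
      exact ⟨[c], rfl, treeRel_single _ c⟩
    | tail _ h ih =>
      obtain ⟨t, rfl, ht⟩ := ih
      obtain ⟨c, rfl⟩ := h
      exact ⟨t ++ [c], by simp, ht.tail ⟨c, rfl⟩⟩
  | rt =>
    induction h with
    | refl => exact ⟨[], by simp, Relation.ReflTransGen.refl⟩
    | tail _ h ih =>
      obtain ⟨t, rfl, ht⟩ := ih
      obtain ⟨c, rfl⟩ := h
      exact ⟨t ++ [c], by simp, ht.tail ⟨c, rfl⟩⟩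

lemma treeRel_itr_ne {A : Type} {z : List A}
    (h : treeRel A .itr [] z) : z ≠ [] := by
  obtain ⟨t, rfl, -⟩ := treeRel_decomp h
  cases h with
  | single h => obtain ⟨c, h⟩ := h; simp [h]
  | tail _ h => obtain ⟨c, h⟩ := h; simp [h]

noncomputable section PMorphism

variable {W : Type}

/-- Step function: a chosen successor. -/
noncomputable def stepFn {R : W → W → Prop} (hser : ∀ u, ∃ v, R u v)
    (u w : W) : W :=
  @ite _ (R u w) (Classical.propDecidable _) w (hser u).choose

lemma stepFn_rel {R : W → W → Prop} (hser : ∀ u, ∃ v, R u v) (u w : W) :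
    R u (stepFn hser u w) := by
  rw [stepFn]
  split
  · assumption
  · exact (hser u).choose_spec

lemma stepFn_eq {R : W → W → Prop} (hser : ∀ u, ∃ v, R u v) {u w : W}
    (h : R u w) : stepFn hser u w = w := by rw [stepFn]; exact if_pos h

/-- The unraveling map body. -/
def goFn (s₁ s₂ : W → W → W) : W → List (W ⊕ W) → W
  | u, [] => u
  | u, (Sum.inl w) :: t => goFn s₁ s₂ (s₁ u w) t
  | u, (Sum.inr w) :: t => goFn s₁ s₂ (s₂ u w) t

lemma goFn_append (s₁ s₂ : W → W → W) (x t : List (W ⊕ W)) (u : W) :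
    goFn s₁ s₂ u (x ++ t) = goFn s₁ s₂ (goFn s₁ s₂ u x) t := by
  induction x generalizing u with
  | nil => rfl
  | cons c x ih => cases c <;> simp [goFn, ih]

lemma goFn_inl (s₁ s₂ : W → W → W) (z : List W) (u : W) :
    goFn s₁ s₂ u (z.map Sum.inl) = z.foldl s₁ u := by
  induction z generalizing u with
  | nil => rfl
  | cons a z ih => simp [goFn, ih, List.foldl]

lemma goFn_inr (s₁ s₂ : W → W → W) (z : List W) (u : W) :
    goFn s₁ s₂ u (z.map Sum.inr) = z.foldl s₂ u := by
  induction z generalizing u with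
  | nil => rfl
  | cons a z ih => simp [goFn, ih, List.foldl]

lemma foldl_rel_trans {W : Type} {R : W → W → Prop} (htr : Transitive R)
    {s : W → W → W} (hs : ∀ u w, R u (s u w)) :
    ∀ (z : List W) (u : W), z ≠ [] → R u (z.foldl s u) := by
  intro z
  induction z with
  | nil => intro u h; exact absurd rfl h
  | cons a z ih =>
    intro u _
    rcases eq_or_ne z [] with rfl | hne
    · simpa [List.foldl] using hs u a
    · exact htr (hs u a) (ih (s u a) hne)

/-- forth condition along a foldl of steps. -/
lemma foldl_rel {W : Type} {k : TreeKind} {R : W → W → Prop} (hk : FrameProp k R)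
    {s : W → W → W} (hs : ∀ u w, R u (s u w)) {z : List W}
    (hz : treeRel W k [] z) (u : W) : R u (z.foldl s u) := by
  cases k with
  | inn =>
    obtain ⟨a, rfl⟩ := hz
    simpa [List.foldl] using hs u a
  | rn =>
    rcases hz with hz | ⟨a, rfl⟩
    · rw [← hz]; exact hk u
    · simpa [List.foldl] using hs u a
  | itr => exact foldl_rel_trans hk.2 hs z u (treeRel_itr_ne hz)
  | rt =>
    rcases eq_or_ne z [] with rfl | hne
    · exact hk.1 u
    · exact foldl_rel_trans hk.2 hs z u hne

/-- The unraveling p-morphism from the product tree onto a rooted bimodal frame. -/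
lemma exists_pmorphism {W : Type} (k₁ k₂ : TreeKind) (R₁ R₂ : W → W → Prop)
    (h₁ : FrameProp k₁ R₁) (h₂ : FrameProp k₂ R₂) (r : W) :
    ∃ H : List (W ⊕ W) → W, H [] = r ∧
      (∀ x y, prodRel1 W W k₁ x y → R₁ (H x) (H y)) ∧
      (∀ x y, prodRel2 W W k₂ x y → R₂ (H x) (H y)) ∧
      (∀ x v, R₁ (H x) v → ∃ y, prodRel1 W W k₁ x y ∧ H y = v) ∧
      (∀ x v, R₂ (H x) v → ∃ y, prodRel2 W W k₂ x y ∧ H y = v) := by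
  set s₁ := stepFn h₁.serial with hs₁def
  set s₂ := stepFn h₂.serial with hs₂def
  set H : List (W ⊕ W) → W := goFn s₁ s₂ r with hHdef
  have hs₁ : ∀ u w, R₁ u (s₁ u w) := stepFn_rel h₁.serial
  have hs₂ : ∀ u w, R₂ u (s₂ u w) := stepFn_rel h₂.serial
  refine ⟨H, rfl, ?_, ?_, ?_, ?_⟩
  · rintro x y ⟨z, hz, rfl⟩
    rw [hHdef, goFn_append, goFn_inl]
    exact foldl_rel h₁ hs₁ hz _
  · rintro x y ⟨z, hz, rfl⟩
    rw [hHdef, goFn_append, goFn_inr]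
    exact foldl_rel h₂ hs₂ hz _
  · intro x v hv
    refine ⟨x ++ [Sum.inl v], ⟨[v], treeRel_single _ v, by simp⟩, ?_⟩
    rw [hHdef, goFn_append]
    show goFn s₁ s₂ (goFn s₁ s₂ r x) [Sum.inl v] = v
    show goFn s₁ s₂ (s₁ (goFn s₁ s₂ r x) v) [] = v
    show s₁ (goFn s₁ s₂ r x) v = v
    exact stepFn_eq h₁.serial hv
  · intro x v hv
    refine ⟨x ++ [Sum.inr v], ⟨[v], treeRel_single _ v, by simp⟩, ?_⟩
    rw [hHdef, goFn_append]
    show s₂ (goFn s₁ s₂ r x) v = v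
    exact stepFn_eq h₂.serial hv

/-! ### Section 6: pseudo-infinite sequences -/

lemma reduceOption_eq_nil' {A : Type} (l : List (Option A))
    (h : ∀ x ∈ l, x = none) : l.reduceOption = [] := by
  induction l with
  | nil => rfl
  | cons a l ih =>
    have := h a (by simp)
    subst this
    rw [List.reduceOption_cons_of_none]
    exact ih (fun x hx => h x (by simp [hx]))

namespace PSeq

variable {A B : Type}

lemma st_spec (α : PSeq A) : ∀ k ≥ α.st, α.1 k = none :=
  Nat.sInf_mem (s := {N | ∀ k ≥ N, α.1 k = none}) α.2

lemma st_le {α : PSeq A} {N : ℕ} (h : ∀ k ≥ N, α.1 k = none) : α.st ≤ N :=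
  Nat.sInf_le h

lemma none_of_le {α : PSeq A} {m : ℕ} (hm : α.st ≤ m) :
    ∀ k ≥ m, α.1 k = none :=
  fun k hk => st_spec α k (le_trans hm hk)

lemma forget_eq {α : PSeq A} {N : ℕ} (h : ∀ k ≥ N, α.1 k = none) :
    α.forget = ((List.range N).map α.1).reduceOption := by
  have hst : α.st ≤ N := st_le h
  obtain ⟨d, rfl⟩ : ∃ d, N = α.st + d := ⟨N - α.st, by omega⟩
  rw [PSeq.forget, List.range_add, List.map_append, List.reduceOption_append]
  rw [reduceOption_eq_nil' (((List.range d).map (fun x => α.st + x)).map α.1) ?_]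
  · simp
  · intro x hx
    simp only [List.mem_map, List.mem_range] at hx
    obtain ⟨j, ⟨i, hi, rfl⟩, rfl⟩ := hx
    exact st_spec α _ (by omega)

/-- The tail of `α` from position `m`, of window length `K`. -/
def tailOf (α : PSeq A) (m K : ℕ) : List A :=
  (((List.range K).map (fun j => α.1 (m + j))).reduceOption)

lemma forget_split (α : PSeq A) (m K : ℕ) (h : α.st ≤ m + K) :
    α.forget = ((List.range m).map α.1).reduceOption ++ tailOf α m K := by
  rw [forget_eq (none_of_le h), List.range_add, List.map_append,
    List.reduceOption_append, List.map_map, tailOf]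
  rfl

lemma forget_eq_append {α α' : PSeq A} {m K : ℕ} (hα : α.st ≤ m)
    (hag : ∀ i < m, α'.1 i = α.1 i) (hK : α'.st ≤ m + K) :
    α'.forget = α.forget ++ tailOf α' m K := by
  have hmap : (List.range m).map α'.1 = (List.range m).map α.1 :=
    List.map_congr_left (fun i hi => hag i (List.mem_range.1 hi))
  rw [forget_split α' m K hK, hmap, ← forget_eq (none_of_le hα)]

/-- Extending a sequence by a list starting at position `M`. -/
def extendSeq (α : PSeq A) (M : ℕ) (t : List A) : PSeq A :=
  ⟨fun i => if i < M then α.1 i else t[i - M]?,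
    ⟨M + t.length, fun k hk => by
      show (if k < M then α.1 k else t[k - M]?) = none
      rw [if_neg (by omega)]
      exact List.getElem?_eq_none (by omega)⟩⟩

lemma extendSeq_agree (α : PSeq A) (M : ℕ) (t : List A) :
    ∀ i < M, (extendSeq α M t).1 i = α.1 i :=
  fun i hi => if_pos hi

lemma extendSeq_st (α : PSeq A) (M : ℕ) (t : List A) :
    (extendSeq α M t).st ≤ M + t.length :=
  st_le (fun k hk => by
    show (if k < M then α.1 k else t[k - M]?) = none
    rw [if_neg (by omega)]
    exact List.getElem?_eq_none (by omega))

lemma reduceOption_getElem? {A : Type} (t : List A) :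
    ((List.range t.length).map (fun j => t[j]?)).reduceOption = t := by
  induction t with
  | nil => rfl
  | cons a t ih =>
    rw [List.length_cons, List.range_succ_eq_map, List.map_cons, List.map_map]
    have : ((fun j => (a :: t)[j]?) ∘ Nat.succ) = fun j => t[j]? := by
      funext j; simp
    rw [this]
    simp only [List.getElem?_cons_zero, List.reduceOption_cons_of_some, ih]

lemma tailOf_extendSeq (α : PSeq A) (M : ℕ) (t : List A) :
    tailOf (extendSeq α M t) M t.length = t := by
  rw [tailOf]
  have : (fun j => (extendSeq α M t).1 (M + j)) = fun j => t[j]? := by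
    funext j
    show (if M + j < M then α.1 (M + j) else t[M + j - M]?) = t[j]?
    rw [if_neg (by omega)]
    congr 1
    omega
  rw [this, reduceOption_getElem?]

lemma forget_extendSeq {α : PSeq A} {M : ℕ} (t : List A) (hM : α.st ≤ M) :
    (extendSeq α M t).forget = α.forget ++ t := by
  have := forget_eq_append (α := α) (α' := extendSeq α M t) (m := M)
    (K := t.length) hM (extendSeq_agree α M t) (extendSeq_st α M t)
  rwa [tailOf_extendSeq] at this

/-! interleaving -/

lemma interleave_even (α : PSeq A) (β : PSeq B) (i : ℕ) :
    (interleave α β).1 (2 * i) = (α.1 i).map Sum.inl := by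
  show (if (2 * i) % 2 = 0 then (α.1 ((2 * i) / 2)).map Sum.inl
    else (β.1 ((2 * i) / 2)).map Sum.inr) = (α.1 i).map Sum.inl
  have h2 : 2 * i / 2 = i := by omega
  rw [if_pos (by omega), h2]

lemma interleave_odd (α : PSeq A) (β : PSeq B) (i : ℕ) :
    (interleave α β).1 (2 * i + 1) = (β.1 i).map Sum.inr := by
  show (if (2 * i + 1) % 2 = 0 then (α.1 ((2 * i + 1) / 2)).map Sum.inl
    else (β.1 ((2 * i + 1) / 2)).map Sum.inr) = (β.1 i).map Sum.inr
  have h2 : (2 * i + 1) / 2 = i := by omega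
  rw [if_neg (by omega), h2]

lemma interleave_none {α : PSeq A} {β : PSeq B} {m : ℕ}
    (hα : α.st ≤ m) (hβ : β.st ≤ m) :
    ∀ k ≥ 2 * m, (interleave α β).1 k = none := by
  intro k hk
  show (if k % 2 = 0 then (α.1 (k / 2)).map Sum.inl
    else (β.1 (k / 2)).map Sum.inr) = none
  split
  · rw [none_of_le hα (k / 2) (by omega)]; rfl
  · rw [none_of_le hβ (k / 2) (by omega)]; rfl

lemma interleave_agree {α α' : PSeq A} {β : PSeq B} {m : ℕ}
    (hag : ∀ i < m, α'.1 i = α.1 i) :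
    ∀ i < 2 * m, (interleave α' β).1 i = (interleave α β).1 i := by
  intro i hi
  show (if i % 2 = 0 then (α'.1 (i / 2)).map Sum.inl
      else (β.1 (i / 2)).map Sum.inr) =
    (if i % 2 = 0 then (α.1 (i / 2)).map Sum.inl
      else (β.1 (i / 2)).map Sum.inr)
  split
  · rw [hag (i / 2) (by omega)]
  · rfl

lemma interleave_agree' {α : PSeq A} {β β' : PSeq B} {m : ℕ}
    (hag : ∀ i < m, β'.1 i = β.1 i) :
    ∀ i < 2 * m, (interleave α β').1 i = (interleave α β).1 i := by
  intro i hi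
  show (if i % 2 = 0 then (α.1 (i / 2)).map Sum.inl
      else (β'.1 (i / 2)).map Sum.inr) =
    (if i % 2 = 0 then (α.1 (i / 2)).map Sum.inl
      else (β.1 (i / 2)).map Sum.inr)
  split
  · rfl
  · rw [hag (i / 2) (by omega)]

/-- two-step decomposition of a range map. -/
lemma range_two_step {C : Type} (f : ℕ → C) (K : ℕ) :
    (List.range (2 * (K + 1))).map f =
      f 0 :: f 1 :: (List.range (2 * K)).map (fun j => f (j + 2)) := by
  have h : 2 * (K + 1) = (2 * K) + 1 + 1 := by omega
  rw [h, List.range_succ_eq_map, List.range_succ_eq_map]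
  simp only [List.map_cons, List.map_map]
  rfl

lemma reduce_interleave_inl (α' : PSeq A) (β : PSeq B) :
    ∀ (K m : ℕ), β.st ≤ m →
      ((List.range (2 * K)).map (fun j => (interleave α' β).1 (2 * m + j))).reduceOption
        = (((List.range K).map (fun j => α'.1 (m + j))).reduceOption).map Sum.inl := by
  intro K
  induction K with
  | zero => intro m _; rfl
  | succ K ih =>
    intro m hβ
    have hm1 : β.st ≤ m + 1 := by omega
    have h2 : (List.range (2 * K)).map (fun j => (interleave α' β).1 (2 * m + (j + 2)))
        = (List.range (2 * K)).map (fun j => (interleave α' β).1 (2 * (m + 1) + j)) :=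
      List.map_congr_left (fun i _ => by
        have he : 2 * m + (i + 2) = 2 * (m + 1) + i := by omega
        rw [he])
    have h3 : List.map ((fun j => α'.1 (m + j)) ∘ Nat.succ) (List.range K)
        = List.map (fun j => α'.1 (m + 1 + j)) (List.range K) :=
      List.map_congr_left (fun i _ => by
        show α'.1 (m + (i + 1)) = α'.1 (m + 1 + i)
        have he : m + (i + 1) = m + 1 + i := by omega
        rw [he])
    have h0 : (interleave α' β).1 (2 * m + 0) = (α'.1 m).map Sum.inl := by
      show (interleave α' β).1 (2 * m) = _
      exact interleave_even α' β m
    have h1 : (interleave α' β).1 (2 * m + 1) = none := by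
      rw [interleave_odd α' β m, none_of_le hβ m le_rfl]
      rfl
    rw [range_two_step, h2, h0, h1, List.range_succ_eq_map, List.map_cons,
      List.map_map, h3]
    simp only [Nat.add_zero]
    cases hc : α'.1 m with
    | none =>
      simp only [Option.map_none, List.reduceOption_cons_of_none]
      exact ih (m + 1) hm1
    | some a =>
      simp only [Option.map_some, List.reduceOption_cons_of_some,
        List.reduceOption_cons_of_none, List.map_cons]
      rw [ih (m + 1) hm1]

lemma reduce_interleave_inr (α : PSeq A) (β' : PSeq B) :
    ∀ (K m : ℕ), α.st ≤ m →
      ((List.range (2 * K)).map (fun j => (interleave α β').1 (2 * m + j))).reduceOption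
        = (((List.range K).map (fun j => β'.1 (m + j))).reduceOption).map Sum.inr := by
  intro K
  induction K with
  | zero => intro m _; rfl
  | succ K ih =>
    intro m hα
    have hm1 : α.st ≤ m + 1 := by omega
    have h2 : (List.range (2 * K)).map (fun j => (interleave α β').1 (2 * m + (j + 2)))
        = (List.range (2 * K)).map (fun j => (interleave α β').1 (2 * (m + 1) + j)) :=
      List.map_congr_left (fun i _ => by
        have he : 2 * m + (i + 2) = 2 * (m + 1) + i := by omega
        rw [he])
    have h3 : List.map ((fun j => β'.1 (m + j)) ∘ Nat.succ) (List.range K)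
        = List.map (fun j => β'.1 (m + 1 + j)) (List.range K) :=
      List.map_congr_left (fun i _ => by
        show β'.1 (m + (i + 1)) = β'.1 (m + 1 + i)
        have he : m + (i + 1) = m + 1 + i := by omega
        rw [he])
    have h0 : (interleave α β').1 (2 * m + 0) = none := by
      show (interleave α β').1 (2 * m) = _
      rw [interleave_even α β' m, none_of_le hα m le_rfl]
      rfl
    have h1 : (interleave α β').1 (2 * m + 1) = (β'.1 m).map Sum.inr :=
      interleave_odd α β' m
    rw [range_two_step, h2, h0, h1, List.range_succ_eq_map, List.map_cons,
      List.map_map, h3]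
    simp only [Nat.add_zero]
    rw [List.reduceOption_cons_of_none]
    cases hc : β'.1 m with
    | none =>
      simp only [Option.map_none, List.reduceOption_cons_of_none]
      exact ih (m + 1) hm1
    | some b =>
      simp only [Option.map_some, List.reduceOption_cons_of_some, List.map_cons]
      rw [ih (m + 1) hm1]

/-- KEY 1: changing the first component beyond `m` appends `inl`-letters. -/
lemma key1 {α α' : PSeq A} {β : PSeq B} {m K : ℕ}
    (hα : α.st ≤ m) (hβ : β.st ≤ m) (hag : ∀ i < m, α'.1 i = α.1 i)
    (hK : α'.st ≤ m + K) :
    (interleave α' β).forget =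
      (interleave α β).forget ++ (tailOf α' m K).map Sum.inl := by
  have hcut : ∀ k ≥ 2 * m + 2 * K, (interleave α' β).1 k = none := by
    intro k hk
    exact interleave_none (m := m + K) hK (by omega) k (by omega)
  rw [forget_eq hcut, List.range_add, List.map_append, List.reduceOption_append]
  congr 1
  · have : ((List.range (2 * m)).map (interleave α' β).1) =
        ((List.range (2 * m)).map (interleave α β).1) := by
      apply List.map_congr_left
      intro i hi
      exact interleave_agree hag i (List.mem_range.1 hi)
    rw [this, ← forget_eq (interleave_none hα hβ)]
  · rw [List.map_map]
    have : ((interleave α' β).1 ∘ fun x => 2 * m + x) =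
        fun j => (interleave α' β).1 (2 * m + j) := rfl
    rw [this, reduce_interleave_inl α' β K m hβ]
    rfl

/-- KEY 2: changing the second component beyond `m` appends `inr`-letters. -/
lemma key2 {α : PSeq A} {β β' : PSeq B} {m K : ℕ}
    (hα : α.st ≤ m) (hβ : β.st ≤ m) (hag : ∀ i < m, β'.1 i = β.1 i)
    (hK : β'.st ≤ m + K) :
    (interleave α β').forget =
      (interleave α β).forget ++ (tailOf β' m K).map Sum.inr := by
  have hcut : ∀ k ≥ 2 * m + 2 * K, (interleave α β').1 k = none := by
    intro k hk
    exact interleave_none (m := m + K) (by omega) hK k (by omega)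
  rw [forget_eq hcut, List.range_add, List.map_append, List.reduceOption_append]
  congr 1
  · have : ((List.range (2 * m)).map (interleave α β').1) =
        ((List.range (2 * m)).map (interleave α β).1) := by
      apply List.map_congr_left
      intro i hi
      exact interleave_agree' hag i (List.mem_range.1 hi)
    rw [this, ← forget_eq (interleave_none hα hβ)]
  · rw [List.map_map]
    have : ((interleave α β').1 ∘ fun x => 2 * m + x) =
        fun j => (interleave α β').1 (2 * m + j) := rfl
    rw [this, reduce_interleave_inr α β' K m hα]
    rfl

/-- The all-zero pseudo-sequence. -/
def zeroSeq (A : Type) : PSeq A := ⟨fun _ => none, 0, fun _ _ => rfl⟩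

lemma forget_zeroSeq : (zeroSeq A).forget = [] := by
  rw [forget_eq (N := 0) (fun _ _ => rfl)]
  rfl

end PSeq

lemma gMap_zero (A B : Type) : gMap (PSeq.zeroSeq A, PSeq.zeroSeq B) = [] := by
  rw [gMap, PSeq.forget_eq (N := 0) ?_]
  · rfl
  · intro k _
    show (if k % 2 = 0 then (Option.map Sum.inl none) else (Option.map Sum.inr none)) = none
    split <;> rfl
/-! ### Section 7: validity on `N_ω` frames -/

/-- The extra axioms corresponding to each tree kind. -/
def KindAx : TreeKind → Set (MFormula 1)
  | .inn => {dAx}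
  | .rn  => {tAx}
  | .itr => {dAx, fourAx}
  | .rt  => {tAx, fourAx}

section NOmega

variable {A : Type}

lemma Unbhd_mono (R : List A → List A → Prop) {k k' : ℕ} (α : PSeq A)
    (h : k ≤ k') : Unbhd R k' α ⊆ Unbhd R k α := by
  rintro β ⟨h1, h2⟩
  exact ⟨fun i hi => h1 i (by omega), h2⟩

lemma mem_nOmega (R : List A → List A → Prop) (α : PSeq A) (S : Set (PSeq A)) :
    S ∈ nOmega R α ↔ ∃ k, Unbhd R k α ⊆ S := by
  rw [nOmega, Filter.mem_iInf_of_directed]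
  · simp only [Filter.mem_principal]
  · intro k k'
    exact ⟨max k k',
      Filter.principal_mono.2 (Unbhd_mono R α (le_max_left _ _)),
      Filter.principal_mono.2 (Unbhd_mono R α (le_max_right _ _))⟩

lemma mem_Unbhd_of_extend (k : TreeKind) (α : PSeq A) (kk : ℕ) {z : List A}
    (hz : treeRel A k [] z) (M : ℕ) (hM : max kk α.st ≤ M) :
    PSeq.extendSeq α M z ∈ Unbhd (treeRel A k) kk α := by
  constructor
  · intro i hi
    exact (PSeq.extendSeq_agree α M z i (by omega)).symm
  · rw [PSeq.forget_extendSeq z (by omega)]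
    exact treeRel_append _ hz

lemma Unbhd_nonempty [Nonempty A] (k : TreeKind) (α : PSeq A) (kk : ℕ) :
    (Unbhd (treeRel A k) kk α).Nonempty := by
  obtain ⟨a⟩ := ‹Nonempty A›
  exact ⟨_, mem_Unbhd_of_extend k α kk (treeRel_single k a) (max kk α.st) le_rfl⟩

lemma nOmega_valid [Nonempty A] (k : TreeKind) :
    ∀ φ ∈ KindAx k, φ ∈ NLog (nOmega (treeRel A k)) := by
  have hd : ∀ (hk : True), dAx ∈ NLog (nOmega (treeRel A k)) := by
    intro _ V α
    intro h1 h2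
    have hint := Filter.inter_mem h1 h2
    have hempty : {y : PSeq A | nSat (fun _ => nOmega (treeRel A k)) V y ((MFormula.prop 0 : MFormula 1))} ∩
        {y : PSeq A | nSat (fun _ => nOmega (treeRel A k)) V y ((MFormula.prop 0 : MFormula 1).neg)} = ∅ := by
      ext y
      simp only [Set.mem_inter_iff, Set.mem_empty_iff_false, iff_false]
      rintro ⟨hy1, hy2⟩
      exact hy2 hy1
    rw [hempty] at hint
    obtain ⟨kk, hsub⟩ := (mem_nOmega _ _ _).1 hint
    obtain ⟨β, hβ⟩ := Unbhd_nonempty k α kk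
    exact hsub hβ
  have ht : (k = .rn ∨ k = .rt) → tAx ∈ NLog (nOmega (treeRel A k)) := by
    intro hk V α h
    obtain ⟨kk, hsub⟩ := (mem_nOmega _ _ _).1 h
    exact hsub ⟨fun i _ => rfl, treeRel_refl hk α.forget⟩
  have h4 : (k = .itr ∨ k = .rt) → fourAx ∈ NLog (nOmega (treeRel A k)) := by
    intro hk V α h
    obtain ⟨kk, hsub⟩ := (mem_nOmega _ _ _).1 h
    refine (mem_nOmega _ _ _).2 ⟨kk, fun β hβ => ?_⟩
    show _ ∈ nOmega (treeRel A k) β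
    refine (mem_nOmega _ _ _).2 ⟨max kk α.st, fun γ hγ => hsub ?_⟩
    refine ⟨fun i hi => ?_, treeRel_trans hk hβ.2 hγ.2⟩
    rw [hβ.1 i hi, hγ.1 i (by omega)]
  cases k with
  | inn => rintro φ rfl; exact hd trivial
  | rn => rintro φ rfl; exact ht (Or.inl rfl)
  | itr =>
    rintro φ (rfl | rfl)
    · exact hd trivial
    · exact h4 (Or.inl rfl)
  | rt =>
    rintro φ (rfl | rfl)
    · exact ht (Or.inr rfl)
    · exact h4 (Or.inr rfl)

/-- Any logic generated by the kind axioms is valid on the `N_ω` tree frame. -/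
lemma nOmega_validates [Nonempty A] {L : Set (MFormula 1)} {k : TreeKind}
    (h : L ⊆ NormalClosure (KindAx k)) :
    ∀ φ ∈ L, NValid (nOmega (treeRel A k)) φ := by
  intro φ hφ
  have : φ ∈ NLog (nOmega (treeRel A k)) :=
    normalClosure_min (nlogn_isNormal _) (nOmega_valid k) (h hφ)
  exact this

end NOmega

/-- A logic `L` matches a tree kind `k`. -/
def Matches (L : Set (MFormula 1)) (k : TreeKind) : Prop :=
  KindAx k ⊆ L ∧ L ⊆ NormalClosure (KindAx k)

lemma logicK_subset {L : Set (MFormula 1)} (hL : IsNormalLogic L) : LogicK ⊆ L :=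
  normalClosure_min hL (Set.empty_subset L)

lemma matches_D : Matches LogicD .inn := by
  constructor
  · rintro φ rfl
    exact subset_normalClosure _ (Or.inr rfl)
  · refine normalClosure_min (normalClosure_isNormal _) ?_
    rintro φ (hφ | rfl)
    · exact logicK_subset (normalClosure_isNormal _) hφ
    · exact subset_normalClosure _ rfl

lemma matches_T : Matches LogicT .rn := by
  constructor
  · rintro φ rfl
    exact subset_normalClosure _ (Or.inr rfl)
  · refine normalClosure_min (normalClosure_isNormal _) ?_
    rintro φ (hφ | rfl)
    · exact logicK_subset (normalClosure_isNormal _) hφ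
    · exact subset_normalClosure _ rfl

lemma matches_D4 : Matches LogicD4 .itr := by
  constructor
  · rintro φ (rfl | rfl)
    · exact subset_normalClosure _ (Or.inl (matches_D.1 rfl))
    · exact subset_normalClosure _ (Or.inr rfl)
  · refine normalClosure_min (normalClosure_isNormal _) ?_
    rintro φ (hφ | rfl)
    · refine normalClosure_min (normalClosure_isNormal _) ?_ hφ
      rintro ψ (hψ | rfl)
      · exact logicK_subset (normalClosure_isNormal _) hψ
      · exact subset_normalClosure _ (Or.inl rfl)
    · exact subset_normalClosure _ (Or.inr rfl)

lemma matches_S4 : Matches LogicS4 .rt := by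
  constructor
  · rintro φ (rfl | rfl)
    · exact subset_normalClosure _ (Or.inl (matches_T.1 rfl))
    · exact subset_normalClosure _ (Or.inr rfl)
  · refine normalClosure_min (normalClosure_isNormal _) ?_
    rintro φ (hφ | rfl)
    · refine normalClosure_min (normalClosure_isNormal _) ?_ hφ
      rintro ψ (hψ | rfl)
      · exact logicK_subset (normalClosure_isNormal _) hψ
      · exact subset_normalClosure _ (Or.inl rfl)
    · exact subset_normalClosure _ (Or.inr rfl)

/-- Canonical frame properties from the kind axioms (translated). -/
lemma kindax_frameprop {L' : Set (MFormula 2)} (hL' : IsNormalLogic L')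
    {k : TreeKind} (i : Fin 2) (hax : ∀ φ ∈ KindAx k, trTo i φ ∈ L') :
    FrameProp k (fun x y : {x : Set (MFormula 2) // LMcs L' x} => canR i x.1 y.1) := by
  have hD : dAx ∈ KindAx k → ∀ u : {x : Set (MFormula 2) // LMcs L' x},
      ∃ v : {x : Set (MFormula 2) // LMcs L' x}, canR i u.1 v.1 := by
    intro hax' u
    have hA : ∀ χ : MFormula 2,
        (MFormula.box i χ).imp (MFormula.box i χ.neg).neg ∈ L' := by
      intro χ
      have := hL'.subst (trTo i dAx) (fun _ => χ) (hax dAx hax')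
      simpa [dAx, trTo, MFormula.subst, MFormula.neg] using this
    obtain ⟨y, hy, hcan⟩ := canR_serial hL' hA u.2
    exact ⟨⟨y, hy⟩, hcan⟩
  have hT : tAx ∈ KindAx k → ∀ u : {x : Set (MFormula 2) // LMcs L' x},
      canR i u.1 u.1 := by
    intro hax' u
    have hA : ∀ χ : MFormula 2, (MFormula.box i χ).imp χ ∈ L' := by
      intro χ
      have := hL'.subst (trTo i tAx) (fun _ => χ) (hax tAx hax')
      simpa [tAx, trTo, MFormula.subst] using this
    exact canR_refl hL' hA u.2
  have h4 : fourAx ∈ KindAx k →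
      Transitive (fun x y : {x : Set (MFormula 2) // LMcs L' x} => canR i x.1 y.1) := by
    intro hax' x y z hxy hyz
    have hA : ∀ χ : MFormula 2,
        (MFormula.box i χ).imp (MFormula.box i (MFormula.box i χ)) ∈ L' := by
      intro χ
      have := hL'.subst (trTo i fourAx) (fun _ => χ) (hax fourAx hax')
      simpa [fourAx, trTo, MFormula.subst] using this
    exact canR_trans hL' hA x.2 hxy hyz
  cases k with
  | inn => exact hD rfl
  | rn => exact hT rfl
  | itr => exact ⟨hD (Or.inl rfl), h4 (Or.inr rfl)⟩
  | rt => exact ⟨hT (Or.inl rfl), h4 (Or.inr rfl)⟩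
/-! ### Section 8: `gMap` is a bounded morphism onto the tree product -/

section GMap

variable {A B : Type}

lemma gMap_eq (α : PSeq A) (β : PSeq B) :
    gMap (α, β) = (interleave α β).forget := rfl

lemma gMap_cond1 (k₁ k₂ : TreeKind) (p : PSeq A × PSeq B) :
    (∀ U ∈ prodTau1 (nOmega (treeRel A k₁)) p,
      gMap '' U ∈ nOfK (prodRel1 A B k₁) (gMap p)) ∧
    (∀ V ∈ nOfK (prodRel1 A B k₁) (gMap p),
      ∃ U ∈ prodTau1 (nOmega (treeRel A k₁)) p, gMap '' U ⊆ V) := by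
  obtain ⟨α, β⟩ := p
  constructor
  · intro U hU
    rw [prodTau1, Filter.mem_map] at hU
    obtain ⟨kk, hsub⟩ := (mem_nOmega _ _ _).1 hU
    rw [nOfK, Filter.mem_principal]
    rintro y ⟨z, hz, rfl⟩
    set M := max (max kk α.st) β.st with hM
    set α' := PSeq.extendSeq α M z with hα'
    have hmem : α' ∈ Unbhd (treeRel A k₁) kk α :=
      mem_Unbhd_of_extend k₁ α kk hz M (by omega)
    have hUmem : (α', β) ∈ U := hsub hmem
    have hg : gMap (α', β) = gMap (α, β) ++ z.map Sum.inl := by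
      rw [gMap_eq, gMap_eq]
      have := PSeq.key1 (α := α) (α' := α') (β := β) (m := M) (K := z.length)
        (by omega) (by omega) (PSeq.extendSeq_agree α M z) (PSeq.extendSeq_st α M z)
      rwa [PSeq.tailOf_extendSeq] at this
    exact ⟨(α', β), hUmem, hg⟩
  · intro V hV
    rw [nOfK, Filter.mem_principal] at hV
    set kk := max α.st β.st with hkk
    refine ⟨(fun a => (a, β)) '' Unbhd (treeRel A k₁) kk α, ?_, ?_⟩
    · rw [prodTau1, Filter.mem_map]
      refine Filter.mem_of_superset ((mem_nOmega _ _ _).2 ⟨kk, subset_rfl⟩) ?_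
      intro a ha
      exact ⟨a, ha, rfl⟩
    · rintro y ⟨q, ⟨α', hα', rfl⟩, rfl⟩
      apply hV
      set m := max kk α.st with hm
      have hag : ∀ i < m, α'.1 i = α.1 i := fun i hi => (hα'.1 i (by omega)).symm
      have hK : α'.st ≤ m + α'.st := by omega
      have hkey := PSeq.key1 (α := α) (α' := α') (β := β) (m := m) (K := α'.st)
        (by omega) (by omega) hag hK
      have happ := PSeq.forget_eq_append (α := α) (α' := α') (m := m) (K := α'.st)
        (by omega) hag hK
      obtain ⟨t, ht, htr⟩ := treeRel_decomp hα'.2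
      have hteq : t = PSeq.tailOf α' m α'.st :=
        List.append_cancel_left (by rw [← ht, ← happ])
      refine ⟨t, htr, ?_⟩
      rw [gMap_eq, gMap_eq, hkey, hteq]
  
lemma gMap_cond2 (k₁ k₂ : TreeKind) (p : PSeq A × PSeq B) :
    (∀ U ∈ prodTau2 (nOmega (treeRel B k₂)) p,
      gMap '' U ∈ nOfK (prodRel2 A B k₂) (gMap p)) ∧
    (∀ V ∈ nOfK (prodRel2 A B k₂) (gMap p),
      ∃ U ∈ prodTau2 (nOmega (treeRel B k₂)) p, gMap '' U ⊆ V) := by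
  obtain ⟨α, β⟩ := p
  constructor
  · intro U hU
    rw [prodTau2, Filter.mem_map] at hU
    obtain ⟨kk, hsub⟩ := (mem_nOmega _ _ _).1 hU
    rw [nOfK, Filter.mem_principal]
    rintro y ⟨z, hz, rfl⟩
    set M := max (max kk β.st) α.st with hM
    set β' := PSeq.extendSeq β M z with hβ'
    have hmem : β' ∈ Unbhd (treeRel B k₂) kk β :=
      mem_Unbhd_of_extend k₂ β kk hz M (by omega)
    have hUmem : (α, β') ∈ U := hsub hmem
    have hg : gMap (α, β') = gMap (α, β) ++ z.map Sum.inr := by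
      rw [gMap_eq, gMap_eq]
      have := PSeq.key2 (α := α) (β := β) (β' := β') (m := M) (K := z.length)
        (by omega) (by omega) (PSeq.extendSeq_agree β M z) (PSeq.extendSeq_st β M z)
      rwa [PSeq.tailOf_extendSeq] at this
    exact ⟨(α, β'), hUmem, hg⟩
  · intro V hV
    rw [nOfK, Filter.mem_principal] at hV
    set kk := max α.st β.st with hkk
    refine ⟨(fun b => (α, b)) '' Unbhd (treeRel B k₂) kk β, ?_, ?_⟩
    · rw [prodTau2, Filter.mem_map]
      refine Filter.mem_of_superset ((mem_nOmega _ _ _).2 ⟨kk, subset_rfl⟩) ?_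
      intro b hb
      exact ⟨b, hb, rfl⟩
    · rintro y ⟨q, ⟨β', hβ', rfl⟩, rfl⟩
      apply hV
      set m := max kk β.st with hm
      have hag : ∀ i < m, β'.1 i = β.1 i := fun i hi => (hβ'.1 i (by omega)).symm
      have hK : β'.st ≤ m + β'.st := by omega
      have hkey := PSeq.key2 (α := α) (β := β) (β' := β') (m := m) (K := β'.st)
        (by omega) (by omega) hag hK
      have happ := PSeq.forget_eq_append (α := β) (α' := β') (m := m) (K := β'.st)
        (by omega) hag hK
      obtain ⟨t, ht, htr⟩ := treeRel_decomp hβ'.2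
      have hteq : t = PSeq.tailOf β' m β'.st :=
        List.append_cancel_left (by rw [← ht, ← happ])
      refine ⟨t, htr, ?_⟩
      rw [gMap_eq, gMap_eq, hkey, hteq]

end GMap
/-! ### Section 9: main theorem -/

theorem nProduct_eq_fusion_of_matches {L₁ L₂ : Set (MFormula 1)}
    {k₁ k₂ : TreeKind} (h₁ : Matches L₁ k₁) (h₂ : Matches L₂ k₂) :
    nProduct L₁ L₂ = Fusion L₁ L₂ := by
  apply Set.Subset.antisymm ?_ (fusion_subset_nProduct L₁ L₂)
  intro φ hφ
  by_contra hnot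
  set L' : Set (MFormula 2) := Fusion L₁ L₂ with hL'def
  have hL' : IsNormalLogic L' := normalClosure_isNormal _
  -- {¬φ} is L'-consistent
  have hcon : LCon L' {φ.neg} := by
    intro Γ hΓ hbot
    apply hnot
    refine hL'.mp _ _ (hL'.taut ((impList Γ .bot).imp φ) ?_) hbot
    intro v hb hi
    have hv : IsVal v := ⟨hb, hi⟩
    rw [hi, val_impList hv]
    intro h
    by_contra hvφ
    refine hb (h (fun γ hγ => ?_))
    have := hΓ γ hγ
    rw [Set.mem_singleton_iff] at this
    subst this
    rw [MFormula.neg, hi]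
    exact fun h' => (hvφ h').elim
  obtain ⟨x₀, hx₀, hsub⟩ := lindenbaum hL' hcon
  have hφx : φ ∉ x₀ := fun h => hx₀.not_both hL' h (hsub rfl)
  -- the canonical frame
  haveI hWne : Nonempty {x : Set (MFormula 2) // LMcs L' x} := ⟨⟨x₀, hx₀⟩⟩
  set W := {x : Set (MFormula 2) // LMcs L' x} with hWdef
  have hax0 : ∀ ψ ∈ KindAx k₁, trTo 0 ψ ∈ L' := fun ψ hψ =>
    subset_normalClosure _ (Or.inl ⟨ψ, h₁.1 hψ, rfl⟩)
  have hax1 : ∀ ψ ∈ KindAx k₂, trTo 1 ψ ∈ L' := fun ψ hψ =>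
    subset_normalClosure _ (Or.inr ⟨ψ, h₂.1 hψ, rfl⟩)
  have hf1 := kindax_frameprop hL' 0 hax0
  have hf2 := kindax_frameprop hL' 1 hax1
  obtain ⟨H, hH0, hforth1, hforth2, hback1, hback2⟩ :=
    exists_pmorphism k₁ k₂ _ _ hf1 hf2 (⟨x₀, hx₀⟩ : W)
  -- frames
  set Rt : Fin 2 → List (W ⊕ W) → List (W ⊕ W) → Prop :=
    ![prodRel1 W W k₁, prodRel2 W W k₂] with hRt
  set Sc : Fin 2 → W → W → Prop := fun i x y => canR i x.1 y.1 with hSc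
  set σtree : Fin 2 → List (W ⊕ W) → Filter (List (W ⊕ W)) :=
    fun i l => nOfK (Rt i) l with hσtree
  set σcan : Fin 2 → W → Filter W :=
    fun i x => Filter.principal {y : W | canR i x.1 y.1} with hσcan
  set Vcan : ℕ → Set W := fun p => {x : W | MFormula.prop p ∈ x.1} with hVcan
  -- τ on products
  set τ₁ := nOmega (treeRel W k₁) with hτ₁
  set τ₂ := nOmega (treeRel W k₂) with hτ₂
  set τprod : Fin 2 → (PSeq W × PSeq W) → Filter (PSeq W × PSeq W) :=
    ![prodTau1 τ₁, prodTau2 τ₂] with hτprod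
  -- conditions for H
  have hmH : ∀ (i : Fin 2) (x : List (W ⊕ W)),
      (∀ U ∈ σtree i x, H '' U ∈ σcan i (H x)) ∧
      (∀ V ∈ σcan i (H x), ∃ U ∈ σtree i x, H '' U ⊆ V) := by
    have hforth : ∀ (i : Fin 2) (x x' : List (W ⊕ W)),
        Rt i x x' → Sc i (H x) (H x') := by
      intro i
      match i with
      | 0 => exact hforth1
      | 1 => exact hforth2
    have hback : ∀ (i : Fin 2) (x : List (W ⊕ W)) (v : W),
        Sc i (H x) v → ∃ x', Rt i x x' ∧ H x' = v := by
      intro i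
      match i with
      | 0 => exact hback1
      | 1 => exact hback2
    intro i x
    exact pmorphism_conditions Rt Sc H hforth hback i x
  -- conditions for gMap
  have hmG : ∀ (i : Fin 2) (p : PSeq W × PSeq W),
      (∀ U ∈ τprod i p, gMap '' U ∈ σtree i (gMap p)) ∧
      (∀ V ∈ σtree i (gMap p), ∃ U ∈ τprod i p, gMap '' U ⊆ V) := by
    intro i
    match i with
    | 0 => exact fun p => gMap_cond1 k₁ k₂ p
    | 1 => exact fun p => gMap_cond2 k₁ k₂ p
  -- validity of L₁, L₂ on the N_ω frames
  have hval1 : ∀ ψ ∈ L₁, NValid τ₁ ψ := nOmega_validates h₁.2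
  have hval2 : ∀ ψ ∈ L₂, NValid τ₂ ψ := nOmega_validates h₂.2
  -- refutation point
  set p₀ : PSeq W × PSeq W := (PSeq.zeroSeq W, PSeq.zeroSeq W) with hp₀
  set V2 : ℕ → Set (PSeq W × PSeq W) :=
    fun p => gMap ⁻¹' (H ⁻¹' (Vcan p)) with hV2
  have h1 : nSat τprod V2 p₀ φ :=
    hφ (PSeq W) (PSeq W) inferInstance inferInstance τ₁ τ₂ hval1 hval2 V2 p₀
  have h2 : nSat σtree (fun p => H ⁻¹' (Vcan p)) (gMap p₀) φ :=
    (nSat_transfer τprod σtree gMap hmG (fun p => H ⁻¹' (Vcan p)) φ p₀).1 h1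
  rw [gMap_zero] at h2
  have h3 : nSat σcan Vcan (H []) φ :=
    (nSat_transfer σtree σcan H hmH Vcan φ []).1 h2
  rw [hH0] at h3
  exact hφx ((truth_lemma hL' φ ⟨x₀, hx₀⟩).1 h3)

/-- For any `L₁, L₂ ∈ {S4, D4, D, T}`: `L₁ ×_n L₂ = L₁ ⊗ L₂`. -/
theorem nProduct_eq_fusion :
    ∀ L₁ ∈ ({LogicS4, LogicD4, LogicD, LogicT} : Set (Set (MFormula 1))),
    ∀ L₂ ∈ ({LogicS4, LogicD4, LogicD, LogicT} : Set (Set (MFormula 1))),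
      nProduct L₁ L₂ = Fusion L₁ L₂ := by
  have key : ∀ L ∈ ({LogicS4, LogicD4, LogicD, LogicT} : Set (Set (MFormula 1))),
      ∃ k : TreeKind, Matches L k := by
    rintro L (rfl | rfl | rfl | rfl)
    · exact ⟨_, matches_S4⟩
    · exact ⟨_, matches_D4⟩
    · exact ⟨_, matches_D⟩
    · exact ⟨_, matches_T⟩
  intro L₁ h₁ L₂ h₂
  obtain ⟨k₁, hk₁⟩ := key L₁ h₁
  obtain ⟨k₂, hk₂⟩ := key L₂ h₂
  exact nProduct_eq_fusion_of_matches hk₁ hk₂
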